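/- For the complete graph K_n on n vertices with a fixed vertex v, the number of functions f : V(K_n) → ℤ with f(v) = 0 and |f(x) - f(y)| ≤ h for all pairs x ≠ y equals (h+1)^n - h^n. -/

import Mathlib

theorem complete_graph_lipschitz_count {V : Type*} [Fintype V]
    (hn : 1 ≤ Fintype.card V) (v : V) (h : ℕ) :
    Nat.card {f : V → ℤ // f v = 0 ∧ ∀ x y : V, x ≠ y → |f x - f y| ≤ (h : ℤ)} =
      (h + 1) ^ (Fintype.card V) - h ^ (Fintype.card V) := by
  classical
  have hne : Nonempty V := Fintype.card_pos_iff.mp hn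
  have huniv : (Finset.univ : Finset V).Nonempty := Finset.univ_nonempty
  -- key bound: for admissible f, f x - min f ≤ h
  have key : ∀ (f : V → ℤ), (∀ x y : V, x ≠ y → |f x - f y| ≤ (h : ℤ)) →
      ∀ x : V, f x - Finset.univ.inf' huniv f ≤ (h : ℤ) := by
    intro f hf x
    obtain ⟨y, -, hy⟩ := Finset.exists_mem_eq_inf' huniv f
    rw [hy]
    rcases eq_or_ne x y with rfl | hxy
    · omega
    · have := hf x y hxy
      have := abs_le.mp this
      omega
  have e : {f : V → ℤ // f v = 0 ∧ ∀ x y : V, x ≠ y → |f x - f y| ≤ (h : ℤ)} ≃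
      {g : V → Fin (h + 1) // ∃ x, g x = 0} := by
    refine
      { toFun := fun f => ⟨fun x => ⟨(f.1 x - Finset.univ.inf' huniv f.1).toNat, ?_⟩, ?_⟩
        invFun := fun g => ⟨fun x => (g.1 x : ℤ) - (g.1 v : ℤ), ?_, ?_⟩
        left_inv := ?_
        right_inv := ?_ }
    · have h1 := key f.1 f.2.2 x
      have h2 : Finset.univ.inf' huniv f.1 ≤ f.1 x := Finset.inf'_le _ (Finset.mem_univ x)
      omega
    · obtain ⟨y, -, hy⟩ := Finset.exists_mem_eq_inf' huniv f.1
      exact ⟨y, by simp [← hy]⟩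
    · simp
    · intro x y hxy
      show |((g.1 x : ℤ) - (g.1 v : ℤ)) - ((g.1 y : ℤ) - (g.1 v : ℤ))| ≤ (h : ℤ)
      have hx : (g.1 x : ℤ) ≤ h := by exact_mod_cast Nat.lt_succ_iff.mp (g.1 x).2
      have hy : (g.1 y : ℤ) ≤ h := by exact_mod_cast Nat.lt_succ_iff.mp (g.1 y).2
      have hx0 : (0 : ℤ) ≤ g.1 x := Int.natCast_nonneg _
      have hy0 : (0 : ℤ) ≤ g.1 y := Int.natCast_nonneg _
      rw [abs_le]
      constructor <;> omega
    · rintro ⟨f, hf0, hf⟩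
      apply Subtype.ext
      funext x
      show ((f x - Finset.univ.inf' huniv f).toNat : ℤ)
          - ((f v - Finset.univ.inf' huniv f).toNat : ℤ) = f x
      have h2 : ∀ z, Finset.univ.inf' huniv f ≤ f z := fun z =>
        Finset.inf'_le _ (Finset.mem_univ z)
      rw [Int.toNat_of_nonneg (by have := h2 x; omega),
        Int.toNat_of_nonneg (by have := h2 v; omega)]
      omega
    · rintro ⟨g, x0, hx0⟩
      have hmin : Finset.univ.inf' huniv (fun y => (g y : ℤ) - (g v : ℤ)) =
          -(g v : ℤ) := by
        apply le_antisymm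
        · have := Finset.inf'_le (fun y => (g y : ℤ) - (g v : ℤ))
            (Finset.mem_univ x0)
          exact le_trans this (by simp [hx0])
        · apply Finset.le_inf'
          intro y _
          have : (0 : ℤ) ≤ g y := Int.natCast_nonneg _
          omega
      apply Subtype.ext
      funext x
      apply Fin.ext
      show ((g x : ℤ) - (g v : ℤ)
          - Finset.univ.inf' huniv (fun y => (g y : ℤ) - (g v : ℤ))).toNat = (g x : ℕ)
      rw [hmin]
      omega
  rw [Nat.card_congr e, Nat.card_eq_fintype_card]
  have hcompl : Fintype.card {g : V → Fin (h + 1) // ¬ ∃ x, g x = 0} =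
      h ^ Fintype.card V := by
    have e2 : {g : V → Fin (h + 1) // ¬ ∃ x, g x = 0} ≃
        (V → {y : Fin (h + 1) // y ≠ 0}) := by
      refine (Equiv.subtypeEquivRight ?_).trans (Equiv.subtypePiEquivPi)
      intro g
      push_neg
      rfl
    rw [Fintype.card_congr e2]
    have : Fintype.card {y : Fin (h + 1) // y ≠ 0} = h := by
      rw [Fintype.card_subtype_compl, Fintype.card_fin, Fintype.card_subtype_eq]; omega
    simp [this]
  have htotal : Fintype.card (V → Fin (h + 1)) = (h + 1) ^ Fintype.card V := by
    simp
  calc Fintype.card {g : V → Fin (h + 1) // ∃ x, g x = 0}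
      = Fintype.card {g : V → Fin (h + 1) // ¬¬∃ x, g x = 0} :=
        Fintype.card_congr (Equiv.subtypeEquivRight fun g => (not_not).symm)
    _ = Fintype.card (V → Fin (h + 1)) -
          Fintype.card {g : V → Fin (h + 1) // ¬∃ x, g x = 0} :=
        Fintype.card_subtype_compl _
    _ = (h + 1) ^ Fintype.card V - h ^ Fintype.card V := by rw [hcompl, htotal]
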